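/- Irrelevant-petal lemma for independent sets: Let G be a graph, k a positive integer, and let v_1, …, v_t be vertices of G such that the closed neighborhoods N[v_1], …, N[v_t] form a sunflower with core Y (i.e., N[v_i] ∩ N[v_j] = Y for all i ≠ j) with t ≥ k + 1. Then for every independent set I of G of size at most k with v_1 ∈ I, there exists an index j ≥ 2 such that (I \ {v_1}) ∪ {v_j} is also an independent set of G of size |I|. -/

import Mathlib

open SimpleGraph

/-- Irrelevant-petal lemma for independent sets: if the closed neighborhoods of distinct
vertices `v 0, …, v (t-1)` form a sunflower with core `Y` and `t ≥ k + 1` petals, then for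
every independent set `I` of size at most `k` containing `v i₀`, some other petal vertex
`v j` can replace `v i₀` in `I`, preserving independence and cardinality. -/
theorem irrelevant_petal_independentSet {V : Type} [DecidableEq V] (G : SimpleGraph V)
    (k t : ℕ) (hk : 1 ≤ k) (ht : k + 1 ≤ t)
    (v : Fin t → V) (hinj : Function.Injective v)
    (Y : Set V)
    (hsun : ∀ i j : Fin t, i ≠ j →
      (insert (v i) (G.neighborSet (v i))) ∩ (insert (v j) (G.neighborSet (v j))) = Y)
    (I : Finset V)
    (hind : ∀ a ∈ I, ∀ b ∈ I, ¬ G.Adj a b)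
    (hIcard : I.card ≤ k)
    (i₀ : Fin t) (hi₀ : v i₀ ∈ I) :
    ∃ j : Fin t, j ≠ i₀ ∧
      (∀ a ∈ insert (v j) (I.erase (v i₀)), ∀ b ∈ insert (v j) (I.erase (v i₀)),
        ¬ G.Adj a b) ∧
      (insert (v j) (I.erase (v i₀))).card = I.card := by
  classical
  set J := I.erase (v i₀) with hJ
  set S : Finset (Fin t) := Finset.univ.filter
    (fun j => j ≠ i₀ ∧ ∃ a ∈ J, a ∈ insert (v j) (G.neighborSet (v j))) with hS
  have hScard : S.card ≤ J.card := by
    apply Finset.card_le_card_of_injOn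
      (fun j => if h : ∃ a ∈ J, a ∈ insert (v j) (G.neighborSet (v j))
        then h.choose else v i₀)
    · intro j hj
      simp only [hS, Finset.mem_filter, Finset.mem_coe] at hj
      obtain ⟨-, hji, hex⟩ := hj
      simp only [dif_pos hex]
      exact hex.choose_spec.1
    · intro j hj j' hj' heq
      by_contra hne
      simp only [hS, Finset.mem_filter, Finset.mem_coe] at hj hj'
      obtain ⟨-, hji, hex⟩ := hj
      obtain ⟨-, hj'i, hex'⟩ := hj'
      simp only [dif_pos hex, dif_pos hex'] at heq
      have haJ : hex.choose ∈ J := hex.choose_spec.1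
      have haN : hex.choose ∈ insert (v j) (G.neighborSet (v j)) := hex.choose_spec.2
      have haN' : hex.choose ∈ insert (v j') (G.neighborSet (v j')) := by
        rw [heq]; exact hex'.choose_spec.2
      have haY : hex.choose ∈ Y := by
        rw [← hsun j j' hne]; exact ⟨haN, haN'⟩
      have haN0 : hex.choose ∈ insert (v i₀) (G.neighborSet (v i₀)) := by
        rw [← hsun i₀ j hji.symm] at haY
        exact haY.1
      rcases Set.mem_insert_iff.mp haN0 with h | h
      · exact (Finset.mem_erase.mp haJ).1 h
      · exact hind (v i₀) hi₀ hex.choose (Finset.mem_of_mem_erase haJ) h.symm.symm.symm.symm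
  have hJcard : J.card = I.card - 1 := Finset.card_erase_of_mem hi₀
  have hIpos : 1 ≤ I.card := Finset.card_pos.mpr ⟨_, hi₀⟩
  have hT : (Finset.univ.filter (fun j : Fin t => j ≠ i₀)).card = t - 1 := by
    rw [Finset.filter_ne', Finset.card_erase_of_mem (Finset.mem_univ _),
      Finset.card_univ, Fintype.card_fin]
  obtain ⟨j, hjne, hjS⟩ : ∃ j : Fin t, j ≠ i₀ ∧ j ∉ S := by
    by_contra hcon
    push_neg at hcon
    have hsub : (Finset.univ.filter (fun j : Fin t => j ≠ i₀)) ⊆ S := by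
      intro j hj
      exact hcon j (Finset.mem_filter.mp hj).2
    have := Finset.card_le_card hsub
    omega
  have hgood : ∀ a ∈ J, ¬ (a = v j ∨ G.Adj (v j) a) := by
    intro a ha hor
    apply hjS
    simp only [hS, Finset.mem_filter]
    refine ⟨Finset.mem_univ _, hjne, a, ha, ?_⟩
    rcases hor with h | h
    · exact Set.mem_insert_iff.mpr (Or.inl h)
    · exact Set.mem_insert_iff.mpr (Or.inr h)
  have hvjJ : v j ∉ J := fun h => hgood _ h (Or.inl rfl)
  refine ⟨j, hjne, ?_, ?_⟩
  · intro a ha b hb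
    rcases Finset.mem_insert.mp ha with rfl | ha' <;>
      rcases Finset.mem_insert.mp hb with rfl | hb'
    · exact G.irrefl
    · exact fun hadj => hgood b hb' (Or.inr hadj)
    · exact fun hadj => hgood a ha' (Or.inr hadj.symm)
    · exact hind a (Finset.mem_of_mem_erase ha') b (Finset.mem_of_mem_erase hb')
  · rw [Finset.card_insert_of_notMem hvjJ, hJcard]
    omega
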